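/- (Unbiasedness and second moment of the IntDIANA estimator.) Fix vectors g_1, …, g_n, h_1, …, h_n ∈ ℝ^d and a scaling vector α ∈ ℝ^d with strictly positive entries. Let Q_i = (1/α) ∘ Int(α ∘ (g_i − h_i)), where the randomized roundings are independent across coordinates and across i = 1, …, n, and let h̄ = (1/n) Σ_{i=1}^n h_i and g = h̄ + (1/n) Σ_{i=1}^n Q_i. Then E[g] = (1/n) Σ_{i=1}^n g_i, and E[‖g‖²] ≤ ‖(1/n) Σ_{i=1}^n g_i‖² + (1/(4n)) Σ_{j=1}^d 1/α_j². -/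

import Mathlib

open MeasureTheory Finset

/-- The randomized integer rounding `Int : ℝ → ℤ`, driven by a uniform random variable
`u ∈ [0,1]`: it returns `⌊t⌋ + 1` when `u < t - ⌊t⌋` (an event of probability `t - ⌊t⌋`)
and `⌊t⌋` otherwise. -/
noncomputable def rInt (t u : ℝ) : ℤ := if u < Int.fract t then ⌊t⌋ + 1 else ⌊t⌋

/-- The randomness driving the roundings: independent uniforms on `[0,1]`, one for each
worker `i = 1, …, n` and each coordinate `j = 1, …, d`. -/
noncomputable def roundMeasure (n d : ℕ) : Measure (Fin n → Fin d → ℝ) :=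
  Measure.pi fun _ => Measure.pi fun _ => volume.restrict (Set.Icc (0 : ℝ) 1)

noncomputable def nu15 : Measure ℝ := volume.restrict (Set.Icc (0:ℝ) 1)
instance : IsProbabilityMeasure nu15 := ⟨by simp [nu15, Real.volume_Icc]⟩

lemma integrable_of_bdd15 {X : Type*} [MeasurableSpace X] {μ : Measure X} [IsFiniteMeasure μ]
    {f : X → ℝ} (hm : Measurable f) {C : ℝ} (hC : ∀ x, |f x| ≤ C) : Integrable f μ :=
  (integrable_const C).mono' hm.aestronglyMeasurable (Filter.Eventually.of_forall fun x => by
    simpa [Real.norm_eq_abs] using hC x)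

lemma integral_step15 (c a b : ℝ) (h0 : 0 ≤ c) (h1 : c < 1) :
    ∫ u, (if u < c then a else b) ∂nu15 = c * a + (1 - c) * b := by
  have hs : MeasurableSet (Set.Iio c) := measurableSet_Iio
  have heq : (fun u : ℝ => if u < c then a else b)
      = fun u => Set.indicator (Set.Iio c) (fun _ => a - b) u + b := by
    funext u; by_cases hu : u < c <;> simp [Set.indicator, hu, Set.mem_Iio]
  have hnu : nu15 (Set.Iio c) = ENNReal.ofReal c := by
    rw [nu15, Measure.restrict_apply hs]
    have hset : Set.Iio c ∩ Set.Icc 0 1 = Set.Ico 0 c := by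
      ext x
      simp only [Set.mem_inter_iff, Set.mem_Iio, Set.mem_Icc, Set.mem_Ico]
      constructor
      · rintro ⟨hx, hx0, _⟩; exact ⟨hx0, hx⟩
      · rintro ⟨hx0, hx⟩; exact ⟨hx, hx0, le_of_lt (lt_trans hx h1)⟩
    rw [hset, Real.volume_Ico]
    simp
  rw [heq, integral_add ((integrable_const (a-b)).indicator hs) (integrable_const b),
    integral_indicator hs, setIntegral_const, integral_const, measureReal_def, hnu]
  simp [ENNReal.toReal_ofReal h0, measure_univ]
  ring

lemma prod_two15 {ι : Type*} [Fintype ι] [DecidableEq ι] {i i' : ι} (hne : i ≠ i')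
    (u v : ι → ℝ) :
    (∏ a, (if a = i then u a else if a = i' then v a else 1)) = u i * v i' := by
  rw [← Finset.prod_subset (Finset.subset_univ {i, i'}) (by
    intro a _ ha
    simp only [Finset.mem_insert, Finset.mem_singleton] at ha
    push_neg at ha
    simp [ha.1, ha.2])]
  rw [Finset.prod_pair hne]
  simp [hne, hne.symm]

lemma pi_eval15 {ι : Type*} [Fintype ι] [DecidableEq ι] {E : Type*} [MeasureSpace E]
    [IsProbabilityMeasure (volume : Measure E)] (f : E → ℝ) (i : ι) :
    ∫ x : ι → E, f (x i) = ∫ x, f x := by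
  have h1 : ∀ x : ι → E, f (x i) = ∏ a, (if a = i then f (x a) else 1) := fun x => by
    rw [Finset.prod_ite_eq']; simp
  simp_rw [h1]
  rw [integral_fintype_prod_volume_eq_prod (f := fun a x => if a = i then f x else 1)]
  have h2 : ∀ a, (∫ x : E, if a = i then f x else 1) = if a = i then ∫ x, f x else 1 := by
    intro a; split_ifs
    · rfl
    · simp
  simp_rw [h2]
  rw [Finset.prod_ite_eq']
  simp

lemma pi_eval2_15 {ι : Type*} [Fintype ι] [DecidableEq ι] {E : Type*} [MeasureSpace E]
    [IsProbabilityMeasure (volume : Measure E)] (f f' : E → ℝ) {i i' : ι} (hne : i ≠ i') :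
    ∫ x : ι → E, f (x i) * f' (x i') = (∫ x, f x) * ∫ x, f' x := by
  have h1 : ∀ x : ι → E, f (x i) * f' (x i')
      = ∏ a, (if a = i then f (x a) else if a = i' then f' (x a) else 1) := fun x => by
    rw [prod_two15 hne]
  simp_rw [h1]
  rw [integral_fintype_prod_volume_eq_prod
    (f := fun a x => if a = i then f x else if a = i' then f' x else 1)]
  have h2 : ∀ a, (∫ x : E, if a = i then f x else if a = i' then f' x else 1)
      = if a = i then ∫ x, f x else if a = i' then ∫ x, f' x else 1 := by
    intro a; split_ifs <;> simp
  simp_rw [h2]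
  exact prod_two15 hne _ _

lemma eval_one15 {n d : ℕ} (f : ℝ → ℝ) (i : Fin n) (j : Fin d) :
    ∫ ω, f (ω i j) ∂(roundMeasure n d) = ∫ u, f u ∂nu15 := by
  letI : MeasureSpace ℝ := ⟨nu15⟩
  haveI : IsProbabilityMeasure (volume : Measure ℝ) := inferInstanceAs (IsProbabilityMeasure nu15)
  haveI : IsProbabilityMeasure (volume : Measure (Fin d → ℝ)) :=
    inferInstanceAs (IsProbabilityMeasure (Measure.pi fun _ : Fin d => (volume : Measure ℝ)))
  calc ∫ ω, f (ω i j) ∂(roundMeasure n d)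
      = ∫ x : Fin d → ℝ, f (x j) := pi_eval15 (fun x : Fin d → ℝ => f (x j)) i
    _ = ∫ u, f u ∂nu15 := pi_eval15 f j

lemma eval_two15 {n d : ℕ} (f f' : ℝ → ℝ) {i i' : Fin n} (hne : i ≠ i') (j j' : Fin d) :
    ∫ ω, f (ω i j) * f' (ω i' j') ∂(roundMeasure n d)
      = (∫ u, f u ∂nu15) * ∫ u, f' u ∂nu15 := by
  letI : MeasureSpace ℝ := ⟨nu15⟩
  haveI : IsProbabilityMeasure (volume : Measure ℝ) := inferInstanceAs (IsProbabilityMeasure nu15)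
  haveI : IsProbabilityMeasure (volume : Measure (Fin d → ℝ)) :=
    inferInstanceAs (IsProbabilityMeasure (Measure.pi fun _ : Fin d => (volume : Measure ℝ)))
  calc ∫ ω, f (ω i j) * f' (ω i' j') ∂(roundMeasure n d)
      = (∫ x : Fin d → ℝ, f (x j)) * ∫ x : Fin d → ℝ, f' (x j') :=
        pi_eval2_15 (fun x : Fin d → ℝ => f (x j)) (fun x : Fin d → ℝ => f' (x j')) hne
    _ = (∫ u, f u ∂nu15) * ∫ u, f' u ∂nu15 := by
        rw [pi_eval15 f j, pi_eval15 f' j']; rfl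

instance roundMeasure.instIsProbabilityMeasure (n d : ℕ) :
    IsProbabilityMeasure (roundMeasure n d) := by
  haveI : IsProbabilityMeasure ((volume : Measure ℝ).restrict (Set.Icc (0:ℝ) 1)) :=
    inferInstanceAs (IsProbabilityMeasure nu15)
  unfold roundMeasure
  infer_instance

noncomputable def psi15 (c α : ℝ) : ℝ → ℝ := fun u =>
  if u < Int.fract c then α⁻¹ * (1 - Int.fract c) else α⁻¹ * (-(Int.fract c))

lemma psi15_key {α : ℝ} (hα : α ≠ 0) (δ u : ℝ) :
    α⁻¹ * (rInt (α * δ) u : ℝ) = δ + psi15 (α * δ) α u := by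
  unfold rInt psi15
  have hf : ((⌊α * δ⌋ : ℤ) : ℝ) = α * δ - Int.fract (α * δ) := by
    rw [← Int.self_sub_fract]
  split_ifs with hu <;> push_cast <;> field_simp <;> linarith [hf]

lemma psi15_int (c α : ℝ) : ∫ u, psi15 c α u ∂nu15 = 0 := by
  unfold psi15
  rw [integral_step15 _ _ _ (Int.fract_nonneg c) (Int.fract_lt_one c)]
  ring

lemma psi15_sq (c α : ℝ) :
    ∫ u, psi15 c α u * psi15 c α u ∂nu15 ≤ 1/4 * (α^2)⁻¹ := by
  have he : (fun u => psi15 c α u * psi15 c α u)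
      = fun u => if u < Int.fract c then (α⁻¹*(1-Int.fract c))*(α⁻¹*(1-Int.fract c))
        else (α⁻¹*(Int.fract c))*(α⁻¹*(Int.fract c)) := by
    funext u; unfold psi15; split_ifs <;> ring
  rw [he, integral_step15 _ _ _ (Int.fract_nonneg c) (Int.fract_lt_one c)]
  have h0 := Int.fract_nonneg c
  have h1 := Int.fract_lt_one c
  have hinv : (α^2)⁻¹ = (α⁻¹)^2 := by rw [inv_pow]
  rw [hinv]
  nlinarith [sq_nonneg (α⁻¹ * (1 - 2*Int.fract c)), sq_nonneg α⁻¹]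

lemma psi15_meas (c α : ℝ) : Measurable (psi15 c α) :=
  Measurable.ite (measurableSet_lt measurable_id measurable_const)
    measurable_const measurable_const

lemma psi15_bdd (c α : ℝ) (u : ℝ) :
    |psi15 c α u| ≤ max |α⁻¹*(1-Int.fract c)| |α⁻¹*(-(Int.fract c))| := by
  unfold psi15; split_ifs
  · exact le_max_left _ _
  · exact le_max_right _ _

/-- (Unbiasedness and second moment of the IntDIANA estimator.)
With `Q_i = (1/α) ∘ Int(α ∘ (g_i − h_i))`, `h̄ = (1/n) Σ_i h_i` and
`gEst = h̄ + (1/n) Σ_i Q_i`, one has `E[gEst] = (1/n) Σ_i g_i` and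
`E[‖gEst‖²] ≤ ‖(1/n) Σ_i g_i‖² + (1/(4n)) Σ_j 1/α_j²` (squared Euclidean norms written
as sums of squares of coordinates). -/
theorem stmt15 (d n : ℕ) (hn : 0 < n)
    (g h : Fin n → Fin d → ℝ) (α : Fin d → ℝ) (hα : ∀ j, 0 < α j)
    (gEst : (Fin n → Fin d → ℝ) → Fin d → ℝ)
    (hgEst : ∀ ω j, gEst ω j = (n : ℝ)⁻¹ * ∑ i, h i j +
      (n : ℝ)⁻¹ * ∑ i, (α j)⁻¹ * (rInt (α j * (g i j - h i j)) (ω i j) : ℝ)) :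
    (∫ ω, gEst ω ∂(roundMeasure n d)) = (n : ℝ)⁻¹ • ∑ i, g i ∧
      (∫ ω, ∑ j, (gEst ω j) ^ 2 ∂(roundMeasure n d)) ≤
        (∑ j, ((n : ℝ)⁻¹ * ∑ i, g i j) ^ 2) + (1 / (4 * n)) * ∑ j, ((α j) ^ 2)⁻¹ := by
  have hμ := roundMeasure.instIsProbabilityMeasure n d
  set m : Fin d → ℝ := fun j => (n : ℝ)⁻¹ * ∑ i, g i j with hm
  set Ψ : Fin n → Fin d → ℝ → ℝ :=
    fun i j => psi15 (α j * (g i j - h i j)) (α j) with hΨ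
  -- rewrite gEst using centered variables
  have hg' : ∀ ω j, gEst ω j = m j + (n : ℝ)⁻¹ * ∑ i, Ψ i j (ω i j) := by
    intro ω j
    rw [hgEst]
    have hkey : ∀ i ∈ (univ : Finset (Fin n)),
        (α j)⁻¹ * (rInt (α j * (g i j - h i j)) (ω i j) : ℝ)
          = (g i j - h i j) + Ψ i j (ω i j) := fun i _ =>
      psi15_key (ne_of_gt (hα j)) _ _
    rw [Finset.sum_congr rfl hkey, Finset.sum_add_distrib, Finset.sum_sub_distrib, hm]
    ring
  -- measurability and integrability of the building blocks
  have hev : ∀ (i : Fin n) (j : Fin d),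
      Measurable fun ω : Fin n → Fin d → ℝ => ω i j :=
    fun i j => (measurable_pi_apply j).comp (measurable_pi_apply i)
  have hint1 : ∀ i j,
      Integrable (fun ω => Ψ i j (ω i j)) (roundMeasure n d) := by
    intro i j
    exact integrable_of_bdd15 ((psi15_meas _ _).comp (hev i j))
      (fun ω => psi15_bdd _ _ _)
  have hint2 : ∀ i i' j,
      Integrable (fun ω => Ψ i j (ω i j) * Ψ i' j (ω i' j)) (roundMeasure n d) := by
    intro i i' j
    refine integrable_of_bdd15
      (((psi15_meas _ _).comp (hev i j)).mul ((psi15_meas _ _).comp (hev i' j)))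
      (C := (max |(α j)⁻¹*(1-Int.fract (α j * (g i j - h i j)))|
              |(α j)⁻¹*(-(Int.fract (α j * (g i j - h i j))))|)
          * (max |(α j)⁻¹*(1-Int.fract (α j * (g i' j - h i' j)))|
              |(α j)⁻¹*(-(Int.fract (α j * (g i' j - h i' j))))|)) ?_
    intro ω
    rw [abs_mul]
    exact mul_le_mul (psi15_bdd _ _ _) (psi15_bdd _ _ _) (abs_nonneg _)
      ((abs_nonneg _).trans (psi15_bdd _ _ (ω i j)))
  -- expectation of each Ψ term vanishes
  have hzero : ∀ i j, (∫ ω, Ψ i j (ω i j) ∂(roundMeasure n d)) = 0 := by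
    intro i j
    rw [eval_one15 (Ψ i j) i j]
    exact psi15_int _ _
  -- scalar expectations of coordinates
  have hgInt : ∀ j, Integrable (fun ω => gEst ω j) (roundMeasure n d) := by
    intro j
    have h1 : (fun ω => gEst ω j)
        = fun ω => m j + (n : ℝ)⁻¹ * ∑ i, Ψ i j (ω i j) := funext fun ω => hg' ω j
    rw [h1]
    exact (integrable_const _).add
      ((integrable_finset_sum _ (fun i _ => hint1 i j)).const_mul _)
  have hscalar : ∀ j, (∫ ω, gEst ω j ∂(roundMeasure n d)) = m j := by
    intro j
    have h1 : (fun ω => gEst ω j)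
        = fun ω => m j + (n : ℝ)⁻¹ * ∑ i, Ψ i j (ω i j) := funext fun ω => hg' ω j
    rw [h1, integral_add (integrable_const _)
        ((integrable_finset_sum _ (fun i _ => hint1 i j)).const_mul _),
      integral_const, integral_const_mul,
      integral_finset_sum _ (fun i _ => hint1 i j),
      Finset.sum_congr rfl (fun i _ => hzero i j)]
    simp [measure_univ]
  constructor
  · -- Part 1: unbiasedness
    have hrep : gEst = fun ω => ∑ j, (gEst ω j) • (Pi.single j 1 : Fin d → ℝ) := by
      funext ω
      rw [← Finset.univ_sum_single (gEst ω)]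
      refine Finset.sum_congr rfl fun j _ => ?_
      funext k
      by_cases hk : k = j <;> simp [Pi.single_apply, hk]
    rw [hrep, integral_finset_sum _ (fun j _ => (hgInt j).smul_const _)]
    have : ∀ j ∈ (univ : Finset (Fin d)),
        (∫ ω, (gEst ω j) • (Pi.single j 1 : Fin d → ℝ) ∂(roundMeasure n d))
          = (m j) • (Pi.single j 1 : Fin d → ℝ) := fun j _ => by
      rw [integral_smul_const, hscalar j]
    rw [Finset.sum_congr rfl this]
    funext k
    simp only [Finset.sum_apply, Pi.smul_apply, Pi.single_apply, smul_eq_mul, mul_ite,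
      mul_one, mul_zero]
    rw [Finset.sum_ite_eq Finset.univ k (fun j => m j)]
    simp [hm, Finset.sum_apply]
  · -- Part 2: second moment bound
    have expand : ∀ ω, (∑ j, (gEst ω j) ^ 2)
        = (∑ j, (m j) ^ 2)
          + (∑ j, ∑ i, (2 * m j * (n : ℝ)⁻¹) * Ψ i j (ω i j))
          + ((n : ℝ)⁻¹) ^ 2 * ∑ j, ∑ i, ∑ i', Ψ i j (ω i j) * Ψ i' j (ω i' j) := by
      intro ω
      have hj : ∀ j ∈ (univ : Finset (Fin d)), (gEst ω j) ^ 2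
          = (m j) ^ 2 + (∑ i, (2 * m j * (n : ℝ)⁻¹) * Ψ i j (ω i j))
            + ((n : ℝ)⁻¹) ^ 2 * ∑ i, ∑ i', Ψ i j (ω i j) * Ψ i' j (ω i' j) := by
        intro j _
        rw [hg' ω j]
        have hsq : (∑ i, Ψ i j (ω i j)) * (∑ i', Ψ i' j (ω i' j))
            = ∑ i, ∑ i', Ψ i j (ω i j) * Ψ i' j (ω i' j) := by
          rw [Finset.sum_mul_sum]
        rw [← hsq, ← Finset.mul_sum]
        ring
      rw [Finset.sum_congr rfl hj, Finset.sum_add_distrib, Finset.sum_add_distrib,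
        ← Finset.mul_sum]
    have hB : (∫ ω, ∑ j, ∑ i, (2 * m j * (n : ℝ)⁻¹) * Ψ i j (ω i j)
        ∂(roundMeasure n d)) = 0 := by
      rw [integral_finset_sum _ (fun j _ => integrable_finset_sum _
        (fun i _ => (hint1 i j).const_mul _))]
      refine Finset.sum_eq_zero fun j _ => ?_
      rw [integral_finset_sum _ (fun i _ => (hint1 i j).const_mul _)]
      refine Finset.sum_eq_zero fun i _ => ?_
      rw [integral_const_mul, hzero i j, mul_zero]
    have hcross : ∀ (j : Fin d) (i i' : Fin n),
        (∫ ω, Ψ i j (ω i j) * Ψ i' j (ω i' j) ∂(roundMeasure n d))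
          = if i' = i then ∫ u, Ψ i j u * Ψ i j u ∂nu15 else 0 := by
      intro j i i'
      by_cases hii : i' = i
      · subst hii
        rw [if_pos rfl]
        exact eval_one15 (fun u => Ψ i' j u * Ψ i' j u) i' j
      · rw [if_neg hii, eval_two15 (Ψ i j) (Ψ i' j) (fun hh => hii hh.symm) j j,
          psi15_int, zero_mul]
    have hC : (∫ ω, ∑ j, ∑ i, ∑ i', Ψ i j (ω i j) * Ψ i' j (ω i' j)
        ∂(roundMeasure n d)) = ∑ j, ∑ i : Fin n, ∫ u, Ψ i j u * Ψ i j u ∂nu15 := by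
      rw [integral_finset_sum _ (fun j _ => integrable_finset_sum _
        (fun i _ => integrable_finset_sum _ (fun i' _ => hint2 i i' j)))]
      refine Finset.sum_congr rfl fun j _ => ?_
      rw [integral_finset_sum _ (fun i _ => integrable_finset_sum _
        (fun i' _ => hint2 i i' j))]
      refine Finset.sum_congr rfl fun i _ => ?_
      rw [integral_finset_sum _ (fun i' _ => hint2 i i' j),
        Finset.sum_congr rfl (fun i' _ => hcross j i i'),
        Finset.sum_ite_eq' Finset.univ i (fun _ => ∫ u, Ψ i j u * Ψ i j u ∂nu15)]
      simp
    have hT : (∫ ω, ∑ j, (gEst ω j) ^ 2 ∂(roundMeasure n d))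
        = (∑ j, (m j) ^ 2)
          + ((n : ℝ)⁻¹) ^ 2 * ∑ j, ∑ i : Fin n, ∫ u, Ψ i j u * Ψ i j u ∂nu15 := by
      have hfun : (fun ω => ∑ j, (gEst ω j) ^ 2)
          = fun ω => (∑ j, (m j) ^ 2)
            + (∑ j, ∑ i, (2 * m j * (n : ℝ)⁻¹) * Ψ i j (ω i j))
            + ((n : ℝ)⁻¹) ^ 2 * ∑ j, ∑ i, ∑ i', Ψ i j (ω i j) * Ψ i' j (ω i' j) :=
        funext expand
      rw [hfun]
      have hintB : Integrable (fun ω => ∑ j, ∑ i, (2 * m j * (n : ℝ)⁻¹) * Ψ i j (ω i j))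
          (roundMeasure n d) :=
        integrable_finset_sum _ (fun j _ => integrable_finset_sum _
          (fun i _ => (hint1 i j).const_mul _))
      have hintC : Integrable (fun ω =>
          ((n : ℝ)⁻¹) ^ 2 * ∑ j, ∑ i, ∑ i', Ψ i j (ω i j) * Ψ i' j (ω i' j))
          (roundMeasure n d) :=
        (integrable_finset_sum _ (fun j _ => integrable_finset_sum _
          (fun i _ => integrable_finset_sum _ (fun i' _ => hint2 i i' j)))).const_mul _
      have hAB : Integrable (fun ω => (∑ j, (m j) ^ 2)
          + ∑ j, ∑ i, (2 * m j * (n : ℝ)⁻¹) * Ψ i j (ω i j)) (roundMeasure n d) :=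
        (integrable_const _).add hintB
      rw [integral_add hAB hintC,
        integral_add (integrable_const _) hintB, integral_const, hB,
        integral_const_mul, hC]
      simp [measure_univ]
    rw [hT]
    have hbound : ∑ j, ∑ i : Fin n, (∫ u, Ψ i j u * Ψ i j u ∂nu15)
        ≤ ∑ j, ∑ _i : Fin n, 1/4 * ((α j)^2)⁻¹ := by
      refine Finset.sum_le_sum fun j _ => Finset.sum_le_sum fun i _ => ?_
      exact psi15_sq _ _
    have hn' : (0 : ℝ) < (n : ℝ) := by exact_mod_cast hn
    calc (∑ j, (m j) ^ 2)
          + ((n : ℝ)⁻¹) ^ 2 * ∑ j, ∑ i : Fin n, ∫ u, Ψ i j u * Ψ i j u ∂nu15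
        ≤ (∑ j, (m j) ^ 2) + ((n : ℝ)⁻¹) ^ 2 * ∑ j, ∑ _i : Fin n, 1/4 * ((α j)^2)⁻¹ := by
          have := mul_le_mul_of_nonneg_left hbound
            (by positivity : (0:ℝ) ≤ ((n : ℝ)⁻¹) ^ 2)
          linarith
      _ = (∑ j, (m j) ^ 2) + (1 / (4 * n)) * ∑ j, ((α j) ^ 2)⁻¹ := by
          have hne0 : (n : ℝ) ≠ 0 := ne_of_gt hn'
          have hsum : ∑ j, ∑ _i : Fin n, (1:ℝ)/4 * ((α j)^2)⁻¹
              = (n : ℝ) * (1/4) * ∑ j, ((α j)^2)⁻¹ := by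
            simp only [Finset.sum_const, Finset.card_univ, Fintype.card_fin, nsmul_eq_mul]
            rw [Finset.mul_sum]
            exact Finset.sum_congr rfl fun j _ => by ring
          rw [hsum]
          congr 1
          field_simp
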